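/- For every odd prime p, there exists a subfield K of the real numbers ℝ such that: (i) for every z ∈ K with 0 ≤ z there exists x ∈ K with x^2 = z; (ii) for every odd natural number m < p and all coefficients a₀, …, a_{m−1} ∈ K, there exists x ∈ K with x^m + a_{m−1}·x^{m−1} + ⋯ + a₁·x + a₀ = 0; and (iii) there is no r ∈ K with r^p = 2. -/

import Mathlib

open Polynomial

/-- Every polynomial of odd degree over a field has a monic irreducible factor of odd degree. -/
private theorem aux_oddFactor {F : Type*} [Field F] :
    ∀ (n : ℕ) (f : Polynomial F), f.natDegree = n → Odd n →
      ∃ g : Polynomial F, g.Monic ∧ Irreducible g ∧ g ∣ f ∧ Odd g.natDegree := by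
  intro n
  induction n using Nat.strong_induction_on with
  | _ n ih =>
    intro f hfn hodd
    have hn0 : n ≠ 0 := by rintro rfl; simp [Nat.odd_iff] at hodd
    have hf0 : f ≠ 0 := by rintro rfl; rw [natDegree_zero] at hfn; exact hn0 hfn.symm
    have hfu : ¬ IsUnit f := fun hu => hn0 (by rw [← hfn, natDegree_eq_zero_of_isUnit hu])
    obtain ⟨g, hgi, hgd⟩ := WfDvdMonoid.exists_irreducible_factor hfu hf0
    obtain ⟨h, rfl⟩ := hgd
    have hg0 : g ≠ 0 := fun h0 => hf0 (by rw [h0, zero_mul])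
    have hh0 : h ≠ 0 := fun h0 => hf0 (by rw [h0, mul_zero])
    have hdeg : g.natDegree + h.natDegree = n := by rw [← hfn, natDegree_mul hg0 hh0]
    by_cases hgodd : Odd g.natDegree
    · have hlc : g.leadingCoeff ≠ 0 := leadingCoeff_ne_zero.mpr hg0
      have hu : IsUnit (C g.leadingCoeff⁻¹) :=
        isUnit_C.mpr (isUnit_iff_ne_zero.mpr (inv_ne_zero hlc))
      refine ⟨g * C g.leadingCoeff⁻¹, monic_mul_leadingCoeff_inv hg0,
        (associated_mul_unit_right g _ hu).irreducible hgi,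
        ⟨C g.leadingCoeff * h, ?_⟩, ?_⟩
      · rw [mul_assoc, ← mul_assoc (C g.leadingCoeff⁻¹), ← C_mul, inv_mul_cancel₀ hlc, C_1,
          one_mul]
      · rwa [natDegree_mul hg0 (C_ne_zero.mpr (inv_ne_zero hlc)), natDegree_C, add_zero]
    · have hg1 : g.natDegree ≠ 0 := by
        intro h0
        have hgC : g = C (g.coeff 0) := eq_C_of_natDegree_eq_zero h0
        have hc0 : g.coeff 0 ≠ 0 := fun hc => hg0 (by rw [hgC, hc, C_0])
        exact hgi.not_isUnit (hgC ▸ isUnit_C.mpr (isUnit_iff_ne_zero.mpr hc0))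
      have hhodd : Odd h.natDegree := by
        rcases Nat.even_or_odd g.natDegree with he | ho
        · obtain ⟨a, ha⟩ := he; obtain ⟨b, hb⟩ := hodd
          exact ⟨b - a, by omega⟩
        · exact absurd ho hgodd
      obtain ⟨g', m1, i1, d1, o1⟩ := ih h.natDegree (by omega) h rfl hhodd
      exact ⟨g', m1, i1, d1.trans (dvd_mul_left h g), o1⟩

/-- Every real polynomial of odd degree has a real root. -/
private theorem aux_oddRealRoot (f : Polynomial ℝ) (hodd : Odd f.natDegree) :
    ∃ x : ℝ, eval x f = 0 := by
  obtain ⟨g, hm, hi, hd, ho⟩ := aux_oddFactor f.natDegree f rfl hodd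
  have h2 : g.natDegree ≤ 2 := hi.natDegree_le_two
  have h1 : g.natDegree = 1 := by
    rcases ho with ⟨k, hk⟩; omega
  obtain ⟨e, rfl⟩ := hd
  refine ⟨-(g.coeff 0), ?_⟩
  have hg : eval (-(g.coeff 0)) g = 0 := by
    conv_lhs => rw [hm.eq_X_add_C h1]
    simp
  rw [eval_mul, hg, zero_mul]

set_option maxHeartbeats 1000000 in
set_option synthInstance.maxHeartbeats 800000 in
theorem exists_real_subfield_weak_rcf_without_pth_root_of_two (p : ℕ)
    (hp : p.Prime) (hodd : Odd p) :
    ∃ K : Subfield ℝ,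
      (∀ z ∈ K, 0 ≤ z → ∃ x ∈ K, x ^ 2 = z) ∧
      (∀ m : ℕ, Odd m → m < p → ∀ a : Fin m → ℝ, (∀ i, a i ∈ K) →
        ∃ x ∈ K, x ^ m + ∑ i : Fin m, a i * x ^ (i : ℕ) = 0) ∧
      (∀ r ∈ K, r ^ p ≠ 2) := by
  have hp2 : p ≠ 2 := by rintro rfl; simp [Nat.odd_iff] at hodd
  have hp3 : 3 ≤ p := by have := hp.two_le; omega
  -- `c` is the real `p`-th root of `2`
  set c : ℝ := (2 : ℝ) ^ ((p : ℝ)⁻¹) with hc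
  have hcp : c ^ p = 2 := by
    rw [hc, ← Real.rpow_natCast ((2 : ℝ) ^ ((p : ℝ)⁻¹)) p, ← Real.rpow_mul (by norm_num),
      inv_mul_cancel₀ (by exact_mod_cast hp.pos.ne'), Real.rpow_one]
  have hirr : Irrational c := by
    have : Fact (Nat.Prime 2) := ⟨Nat.prime_two⟩
    refine irrational_nrt_of_n_not_dvd_multiplicity p (m := 2) (by norm_num) 2 ?_ ?_
    · exact_mod_cast hcp
    · rw [show ((2 : ℕ) : ℤ) = (2 : ℤ) by norm_num, multiplicity_self,
        Nat.one_mod_eq_one.mpr (by omega)]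
      exact one_ne_zero
  have hmono : StrictMono (fun a : ℝ => a ^ p) := hodd.strictMono_pow
  have huniq : ∀ r : ℝ, r ^ p = 2 → r = c := fun r hr =>
    hmono.injective (a₁ := r) (a₂ := c) (by show r ^ p = c ^ p; rw [hr, hcp])
  -- Zorn's lemma: a maximal subfield not containing `c`
  obtain ⟨M, -, hMmax⟩ := zorn_le_nonempty₀ {F : Subfield ℝ | c ∉ F}
    (fun C hCs hCc y hyC => by
      refine ⟨sSup C, ?_, fun z hz => le_sSup hz⟩
      intro hmem
      rw [Subfield.mem_sSup_of_directedOn ⟨y, hyC⟩ hCc.directedOn] at hmem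
      obtain ⟨s, hsC, hcs⟩ := hmem
      exact hCs hsC hcs)
    ((Rat.castHom ℝ).fieldRange)
    (by
      intro hmem
      rw [RingHom.mem_fieldRange] at hmem
      obtain ⟨q, hq⟩ := hmem
      exact hirr ⟨q, hq⟩)
  have hM : c ∉ M := hMmax.1
  have hval : ∀ y : M, algebraMap M ℝ y = (y : ℝ) := fun _ => rfl
  have h2M : (2 : ℝ) ∈ M := by
    have := add_mem M.one_mem M.one_mem
    rw [one_add_one_eq_two] at this
    exact this
  -- key: if x is integral over M and not in M, then p divides the degree of its min poly
  have key : ∀ x : ℝ, IsIntegral M x → x ∉ M → p ∣ (minpoly M x).natDegree := by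
    intro x hint hxM
    set F : IntermediateField M ℝ := IntermediateField.adjoin M ({x} : Set ℝ) with hF
    have hfd : FiniteDimensional M F := IntermediateField.adjoin.finiteDimensional hint
    have hxF : x ∈ F := IntermediateField.mem_adjoin_simple_self M x
    have hMF : M ≤ F.toSubfield := by
      intro y hy
      rw [IntermediateField.mem_toSubfield]
      exact F.algebraMap_mem ⟨y, hy⟩
    have hcF : c ∈ F := by
      by_contra hcF
      have hnotin : c ∉ F.toSubfield := by
        rwa [IntermediateField.mem_toSubfield]
      have hle : F.toSubfield ≤ M := hMmax.2 hnotin hMF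
      exact hxM (hle ((IntermediateField.mem_toSubfield F x).mpr hxF))
    set two : M := ⟨2, h2M⟩ with htwo
    have hne : ∀ b : M, b ^ p ≠ two := by
      intro b hb
      apply hM
      have hb' : (b : ℝ) ^ p = 2 := by
        have := congrArg (Subtype.val) hb
        push_cast at this
        simpa [htwo] using this
      rw [← huniq b hb']
      exact b.2
    have hfirr : Irreducible ((X : Polynomial M) ^ p - C two) :=
      X_pow_sub_C_irreducible_of_prime hp hne
    set cF : F := ⟨c, hcF⟩ with hcFdef
    have haev : aeval cF ((X : Polynomial M) ^ p - C two) = 0 := by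
      have hinj : Function.Injective (F.val : F →ₐ[M] ℝ) := Subtype.val_injective
      apply hinj
      rw [map_zero, ← Polynomial.aeval_algHom_apply]
      have hvc : (F.val : F →ₐ[M] ℝ) cF = c := rfl
      rw [hvc, map_sub, map_pow, aeval_X, aeval_C, hval two]
      show c ^ p - (2 : ℝ) = 0
      rw [hcp, sub_self]
    have hminc : minpoly M cF = (X : Polynomial M) ^ p - C two :=
      (minpoly.eq_of_irreducible_of_monic hfirr haev (monic_X_pow_sub_C two hp.ne_zero)).symm
    have hdvd := minpoly.degree_dvd (K := M) (L := F) (IsIntegral.of_finite M cF)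
    rw [hminc, natDegree_X_pow_sub_C] at hdvd
    rwa [← IntermediateField.adjoin.finrank hint]
  refine ⟨M, ?_, ?_, ?_⟩
  · -- square roots
    intro z hz hz0
    by_cases hs : Real.sqrt z ∈ M
    · exact ⟨Real.sqrt z, hs, Real.sq_sqrt hz0⟩
    exfalso
    set s := Real.sqrt z with hsdef
    have haevs : aeval s ((X : Polynomial M) ^ 2 - C (⟨z, hz⟩ : M)) = 0 := by
      rw [map_sub, map_pow, aeval_X, aeval_C, hval]
      show s ^ 2 - z = 0
      rw [Real.sq_sqrt hz0, sub_self]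
    have hint : IsIntegral M s :=
      ⟨(X : Polynomial M) ^ 2 - C (⟨z, hz⟩ : M), monic_X_pow_sub_C _ two_ne_zero,
        by rwa [← aeval_def]⟩
    have hdvd := key s hint hs
    have hle : (minpoly M s).natDegree ≤ 2 := by
      have hd := minpoly.dvd M s haevs
      have := natDegree_le_of_dvd hd (monic_X_pow_sub_C (⟨z, hz⟩ : M) two_ne_zero).ne_zero
      rwa [natDegree_X_pow_sub_C] at this
    have hpos : 0 < (minpoly M s).natDegree := minpoly.natDegree_pos hint
    have := Nat.le_of_dvd hpos hdvd
    omega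
  · -- roots of odd degree monic polynomials
    intro m hm hmp a haM
    set a' : Fin m → M := fun i => ⟨a i, haM i⟩ with ha'
    set q : Polynomial M := X ^ m + ∑ i : Fin m, C (a' i) * X ^ (i : ℕ) with hq
    have hm0 : m ≠ 0 := by rintro rfl; simp [Nat.odd_iff] at hm
    have hsumdeg : (∑ i : Fin m, C (a' i) * X ^ (i : ℕ) : Polynomial M).degree
        < ((X : Polynomial M) ^ m).degree := by
      rw [degree_X_pow]
      refine lt_of_le_of_lt (degree_sum_le _ _) ?_
      rw [Finset.sup_lt_iff (by exact_mod_cast WithBot.bot_lt_coe m)]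
      intro i _
      refine lt_of_le_of_lt (degree_C_mul_X_pow_le _ _) ?_
      exact_mod_cast i.isLt
    have hqdeg : q.natDegree = m := by
      have : q.degree = m := by
        rw [hq, degree_add_eq_left_of_degree_lt hsumdeg, degree_X_pow]
      exact natDegree_eq_of_degree_eq_some this
    have hq0 : q ≠ 0 := fun h0 => hm0 (by rw [h0, natDegree_zero] at hqdeg; omega)
    obtain ⟨g, hgm, hgi, hgd, hgo⟩ := aux_oddFactor q.natDegree q rfl (hqdeg ▸ hm)
    have hgle : g.natDegree ≤ m := hqdeg ▸ natDegree_le_of_dvd hgd hq0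
    obtain ⟨x, hx⟩ := aux_oddRealRoot (g.map (algebraMap M ℝ))
      (by rwa [hgm.natDegree_map])
    have hxg : aeval x g = 0 := by rwa [aeval_def, ← eval_map]
    have hxint : IsIntegral M x := ⟨g, hgm, by rwa [← aeval_def]⟩
    have hminx : minpoly M x = g := (minpoly.eq_of_irreducible_of_monic hgi hxg hgm).symm
    have hxM : x ∈ M := by
      by_contra hxM
      have hdvd := key x hxint hxM
      rw [hminx] at hdvd
      have hpos : 0 < g.natDegree := by
        rcases hgo with ⟨k, hk⟩; omega
      have := Nat.le_of_dvd hpos hdvd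
      omega
    refine ⟨x, hxM, ?_⟩
    obtain ⟨k, hk⟩ := hgd
    have hqx : aeval x q = 0 := by rw [hk, map_mul, hxg, zero_mul]
    have hcomp : aeval x q = x ^ m + ∑ i : Fin m, a i * x ^ (i : ℕ) := by
      rw [hq, map_add, map_pow, aeval_X, map_sum]
      congr 1
      refine Finset.sum_congr rfl fun i _ => ?_
      rw [map_mul, aeval_C, map_pow, aeval_X, hval]
    rw [← hcomp, hqx]
  · -- no p-th root of 2
    intro r hr hrp
    rw [huniq r hrp] at hr
    exact hM hr
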